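/- Let F : ℝ → ℝ be continuous and let u be a C² solution of u_xx + u_yy = x^{−2}F(u) on an open set Ω ⊆ {x > 0}. Define the inversion v(x,y) := u(x/(x²+y²), y/(x²+y²)) on the open set of (x,y) with x > 0 and (x/(x²+y²), y/(x²+y²)) ∈ Ω. Then v_xx + v_yy = x^{−2}F(v) on that set. -/

import Mathlib

/-- Partial derivative in the first variable. -/
noncomputable def pdx (f : ℝ → ℝ → ℝ) (x y : ℝ) : ℝ := deriv (fun x' => f x' y) x

/-- Partial derivative in the second variable. -/
noncomputable def pdy (f : ℝ → ℝ → ℝ) (x y : ℝ) : ℝ := deriv (fun y' => f x y') y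

lemma chainHD {G : ℝ × ℝ → ℝ} {a b : ℝ} (hG : DifferentiableAt ℝ G (a, b))
    {g h : ℝ → ℝ} {g' h' t : ℝ} (hg : HasDerivAt g g' t) (hh : HasDerivAt h h' t)
    (ha : g t = a) (hb : h t = b) :
    HasDerivAt (fun s => G (g s, h s))
      (g' * fderiv ℝ G (a, b) ((1:ℝ), (0:ℝ)) + h' * fderiv ℝ G (a, b) ((0:ℝ), (1:ℝ))) t := by
  subst ha; subst hb
  have hgh : HasDerivAt (fun s => (g s, h s)) (g', h') t := hg.prodMk hh
  have H := hG.hasFDerivAt.comp_hasDerivAt t hgh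
  refine H.congr_deriv ?_
  have e : (g', h') = g' • ((1:ℝ), (0:ℝ)) + h' • ((0:ℝ), (1:ℝ)) := by simp
  rw [e, map_add, map_smul, map_smul, smul_eq_mul, smul_eq_mul]

lemma L1 {x y : ℝ} (h : x^2 + y^2 ≠ 0) :
    HasDerivAt (fun t => t/(t^2+y^2)) ((y^2-x^2)/(x^2+y^2)^2) x := by
  have h1 : HasDerivAt (fun t : ℝ => t^2 + y^2) (2*x) x := by
    simpa using (hasDerivAt_pow 2 x).add_const (y^2)
  have := (hasDerivAt_id x).div h1 h
  refine this.congr_deriv ?_; simp only [id]; field_simp; ring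

lemma L2 {x y : ℝ} (h : x^2 + y^2 ≠ 0) :
    HasDerivAt (fun t => y/(t^2+y^2)) (-(2*x*y)/(x^2+y^2)^2) x := by
  have h1 : HasDerivAt (fun t : ℝ => t^2 + y^2) (2*x) x := by
    simpa using (hasDerivAt_pow 2 x).add_const (y^2)
  have := (hasDerivAt_const x y).div h1 h
  refine this.congr_deriv ?_; field_simp; ring

lemma L3 {x y : ℝ} (h : x^2 + y^2 ≠ 0) :
    HasDerivAt (fun t => x/(x^2+t^2)) (-(2*x*y)/(x^2+y^2)^2) y := by
  have h1 : HasDerivAt (fun t : ℝ => x^2 + t^2) (2*y) y := by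
    simpa using (hasDerivAt_pow 2 y).const_add (x^2)
  have := (hasDerivAt_const y x).div h1 h
  refine this.congr_deriv ?_; field_simp; ring

lemma L4 {x y : ℝ} (h : x^2 + y^2 ≠ 0) :
    HasDerivAt (fun t => t/(x^2+t^2)) ((x^2-y^2)/(x^2+y^2)^2) y := by
  have h1 : HasDerivAt (fun t : ℝ => x^2 + t^2) (2*y) y := by
    simpa using (hasDerivAt_pow 2 y).const_add (x^2)
  have := (hasDerivAt_id y).div h1 h
  refine this.congr_deriv ?_; simp only [id]; field_simp; ring

lemma M1 {x y : ℝ} (h : x^2 + y^2 ≠ 0) :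
    HasDerivAt (fun t => (y^2-t^2)/(t^2+y^2)^2) ((2*x^3-6*x*y^2)/(x^2+y^2)^3) x := by
  have hn : HasDerivAt (fun t : ℝ => y^2 - t^2) (-(2*x)) x := by
    simpa using ((hasDerivAt_pow 2 x).const_sub (y^2))
  have h1 : HasDerivAt (fun t : ℝ => t^2 + y^2) (2*x) x := by
    simpa using (hasDerivAt_pow 2 x).add_const (y^2)
  have hd : HasDerivAt (fun t : ℝ => (t^2+y^2)^2) (2*(x^2+y^2)^1*(2*x)) x := by
    simpa using h1.fun_pow 2
  have := hn.div hd (pow_ne_zero 2 h)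
  refine this.congr_deriv ?_; field_simp; ring

lemma M2 {x y : ℝ} (h : x^2 + y^2 ≠ 0) :
    HasDerivAt (fun t => -(2*t*y)/(t^2+y^2)^2) ((6*x^2*y-2*y^3)/(x^2+y^2)^3) x := by
  have hn : HasDerivAt (fun t : ℝ => -(2*t*y)) (-(2*y)) x := by
    have h0 : HasDerivAt (fun t : ℝ => t) 1 x := hasDerivAt_id x
    have := ((h0.const_mul (2:ℝ)).mul_const y).neg
    refine this.congr_deriv ?_; ring
  have h1 : HasDerivAt (fun t : ℝ => t^2 + y^2) (2*x) x := by
    simpa using (hasDerivAt_pow 2 x).add_const (y^2)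
  have hd : HasDerivAt (fun t : ℝ => (t^2+y^2)^2) (2*(x^2+y^2)^1*(2*x)) x := by
    simpa using h1.fun_pow 2
  have := hn.div hd (pow_ne_zero 2 h)
  refine this.congr_deriv ?_; field_simp; ring

lemma M3 {x y : ℝ} (h : x^2 + y^2 ≠ 0) :
    HasDerivAt (fun t => -(2*x*t)/(x^2+t^2)^2) ((-2*x^3+6*x*y^2)/(x^2+y^2)^3) y := by
  have hn : HasDerivAt (fun t : ℝ => -(2*x*t)) (-(2*x)) y := by
    have h0 : HasDerivAt (fun t : ℝ => t) 1 y := hasDerivAt_id y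
    have := (h0.const_mul (2*x)).neg
    refine this.congr_deriv ?_; ring
  have h1 : HasDerivAt (fun t : ℝ => x^2 + t^2) (2*y) y := by
    simpa using (hasDerivAt_pow 2 y).const_add (x^2)
  have hd : HasDerivAt (fun t : ℝ => (x^2+t^2)^2) (2*(x^2+y^2)^1*(2*y)) y := by
    simpa using h1.fun_pow 2
  have := hn.div hd (pow_ne_zero 2 h)
  refine this.congr_deriv ?_; field_simp; ring

lemma M4 {x y : ℝ} (h : x^2 + y^2 ≠ 0) :
    HasDerivAt (fun t => (x^2-t^2)/(x^2+t^2)^2) ((-6*x^2*y+2*y^3)/(x^2+y^2)^3) y := by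
  have hn : HasDerivAt (fun t : ℝ => x^2 - t^2) (-(2*y)) y := by
    simpa using ((hasDerivAt_pow 2 y).const_sub (x^2))
  have h1 : HasDerivAt (fun t : ℝ => x^2 + t^2) (2*y) y := by
    simpa using (hasDerivAt_pow 2 y).const_add (x^2)
  have hd : HasDerivAt (fun t : ℝ => (x^2+t^2)^2) (2*(x^2+y^2)^1*(2*y)) y := by
    simpa using h1.fun_pow 2
  have := hn.div hd (pow_ne_zero 2 h)
  refine this.congr_deriv ?_; field_simp; ring

lemma pdx_eq (u : ℝ → ℝ → ℝ) (a b : ℝ)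
    (hd : DifferentiableAt ℝ (fun p : ℝ × ℝ => u p.1 p.2) (a, b)) :
    pdx u a b = fderiv ℝ (fun p : ℝ × ℝ => u p.1 p.2) (a, b) ((1:ℝ), (0:ℝ)) := by
  have h := (chainHD hd (hasDerivAt_id a) (hasDerivAt_const a b) rfl rfl).deriv
  simpa [pdx] using h

lemma pdy_eq (u : ℝ → ℝ → ℝ) (a b : ℝ)
    (hd : DifferentiableAt ℝ (fun p : ℝ × ℝ => u p.1 p.2) (a, b)) :
    pdy u a b = fderiv ℝ (fun p : ℝ × ℝ => u p.1 p.2) (a, b) ((0:ℝ), (1:ℝ)) := by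
  have h := (chainHD hd (hasDerivAt_const b a) (hasDerivAt_id b) rfl rfl).deriv
  simpa [pdy] using h

/-- If u solves ∇²u = x⁻²F(u) on an open Ω ⊆ {x>0}, then the inversion
v(x,y) = u(x/(x²+y²), y/(x²+y²)) solves the same equation on the set where
x > 0 and the inverted point lies in Ω. -/
theorem stmt_11 (F : ℝ → ℝ) (hF : Continuous F)
    (Ω : Set (ℝ × ℝ)) (hΩopen : IsOpen Ω) (hΩsub : Ω ⊆ {p : ℝ × ℝ | 0 < p.1})
    (u : ℝ → ℝ → ℝ) (hu : ContDiffOn ℝ 2 (fun p : ℝ × ℝ => u p.1 p.2) Ω)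
    (hpde : ∀ x y : ℝ, (x, y) ∈ Ω →
      pdx (pdx u) x y + pdy (pdy u) x y = x ^ (-2 : ℤ) * F (u x y))
    (v : ℝ → ℝ → ℝ)
    (hv : ∀ x y : ℝ, v x y = u (x / (x ^ 2 + y ^ 2)) (y / (x ^ 2 + y ^ 2))) :
    ∀ x y : ℝ, 0 < x → (x / (x ^ 2 + y ^ 2), y / (x ^ 2 + y ^ 2)) ∈ Ω →
      pdx (pdx v) x y + pdy (pdy v) x y = x ^ (-2 : ℤ) * F (v x y) := by
  intro x y hx hmem
  have hr2 : (0:ℝ) < x ^ 2 + y ^ 2 := by positivity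
  have hr : x ^ 2 + y ^ 2 ≠ 0 := ne_of_gt hr2
  set W : ℝ × ℝ → ℝ := fun p => u p.1 p.2 with hW
  set X := x / (x ^ 2 + y ^ 2) with hX
  set Y := y / (x ^ 2 + y ^ 2) with hY
  have hXpos : 0 < X := hΩsub hmem
  have hXne : X ≠ 0 := ne_of_gt hXpos
  -- differentiability infrastructure
  have hUd : ∀ p ∈ Ω, DifferentiableAt ℝ W p := fun p hp =>
    (hu.contDiffAt (hΩopen.mem_nhds hp)).differentiableAt (by norm_num)
  have hfd : ContDiffOn ℝ 1 (fun p => fderiv ℝ W p) Ω :=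
    hu.fderiv_of_isOpen hΩopen (by norm_num)
  set gx : ℝ × ℝ → ℝ := fun p => fderiv ℝ W p ((1:ℝ), (0:ℝ)) with hgx
  set gy : ℝ × ℝ → ℝ := fun p => fderiv ℝ W p ((0:ℝ), (1:ℝ)) with hgy
  have hXd : ∀ p ∈ Ω, DifferentiableAt ℝ gx p := by
    intro p hp
    have h0 : DifferentiableAt ℝ (fun q => fderiv ℝ W q) p :=
      (hfd.contDiffAt (hΩopen.mem_nhds hp)).differentiableAt one_ne_zero
    exact ((ContinuousLinearMap.apply ℝ ℝ ((1:ℝ), (0:ℝ))).differentiableAt).comp p h0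
  have hYd : ∀ p ∈ Ω, DifferentiableAt ℝ gy p := by
    intro p hp
    have h0 : DifferentiableAt ℝ (fun q => fderiv ℝ W q) p :=
      (hfd.contDiffAt (hΩopen.mem_nhds hp)).differentiableAt one_ne_zero
    exact ((ContinuousLinearMap.apply ℝ ℝ ((0:ℝ), (1:ℝ))).differentiableAt).comp p h0
  -- second partials of u at (X, Y)
  have hΩnx : ∀ᶠ t in nhds X, (t, Y) ∈ Ω := by
    have hc : Continuous fun t : ℝ => (t, Y) := by fun_prop
    exact Filter.eventually_of_mem
      (hc.continuousAt.preimage_mem_nhds (hΩopen.mem_nhds hmem)) (fun t ht => ht)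
  have hΩny : ∀ᶠ t in nhds Y, (X, t) ∈ Ω := by
    have hc : Continuous fun t : ℝ => (X, t) := by fun_prop
    exact Filter.eventually_of_mem
      (hc.continuousAt.preimage_mem_nhds (hΩopen.mem_nhds hmem)) (fun t ht => ht)
  have huxx : pdx (pdx u) X Y = fderiv ℝ gx (X, Y) ((1:ℝ), (0:ℝ)) := by
    have hev : (fun t => pdx u t Y) =ᶠ[nhds X] (fun t => gx (t, Y)) := by
      filter_upwards [hΩnx] with t ht
      exact pdx_eq u t Y (hUd _ ht)
    show deriv (fun t => pdx u t Y) X = _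
    rw [hev.deriv_eq]
    have h := (chainHD (hXd _ hmem) (hasDerivAt_id X) (hasDerivAt_const X Y) rfl rfl).deriv
    simpa using h
  have huyy : pdy (pdy u) X Y = fderiv ℝ gy (X, Y) ((0:ℝ), (1:ℝ)) := by
    have hev : (fun t => pdy u X t) =ᶠ[nhds Y] (fun t => gy (X, t)) := by
      filter_upwards [hΩny] with t ht
      exact pdy_eq u X t (hUd _ ht)
    show deriv (fun t => pdy u X t) Y = _
    rw [hev.deriv_eq]
    have h := (chainHD (hYd _ hmem) (hasDerivAt_const Y X) (hasDerivAt_id Y) rfl rfl).deriv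
    simpa using h
  set A1 := fderiv ℝ gx (X, Y) ((1:ℝ), (0:ℝ)) with hA1
  set A2 := fderiv ℝ gx (X, Y) ((0:ℝ), (1:ℝ)) with hA2
  set B1 := fderiv ℝ gy (X, Y) ((1:ℝ), (0:ℝ)) with hB1
  set B2 := fderiv ℝ gy (X, Y) ((0:ℝ), (1:ℝ)) with hB2
  have hlap : A1 + B2 = (X ^ 2)⁻¹ * F (u X Y) := by
    have h := hpde X Y hmem
    rw [huxx, huyy] at h
    rw [show X ^ (-2:ℤ) = (X ^ 2)⁻¹ by
      rw [show ((-2:ℤ)) = -((2:ℕ):ℤ) by norm_num, zpow_neg, zpow_natCast]] at h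
    exact h
  -- the open set S where the inversion identity is valid
  set S : Set (ℝ × ℝ) := {p : ℝ × ℝ | 0 < p.1} ∩
      (fun p : ℝ × ℝ => (p.1 / (p.1 ^ 2 + p.2 ^ 2), p.2 / (p.1 ^ 2 + p.2 ^ 2))) ⁻¹' Ω
      with hS
  have hSopen : IsOpen S := by
    apply ContinuousOn.isOpen_inter_preimage _ (isOpen_lt continuous_const continuous_fst)
      hΩopen
    have hden : ∀ p : ℝ × ℝ, p ∈ {p : ℝ × ℝ | 0 < p.1} → p.1 ^ 2 + p.2 ^ 2 ≠ 0 := by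
      intro p hp
      have : (0:ℝ) < p.1 := hp
      positivity
    apply ContinuousOn.prodMk
    · exact ContinuousOn.div (continuous_fst.continuousOn)
        ((continuous_fst.pow 2 |>.add (continuous_snd.pow 2)).continuousOn) hden
    · exact ContinuousOn.div (continuous_snd.continuousOn)
        ((continuous_fst.pow 2 |>.add (continuous_snd.pow 2)).continuousOn) hden
  have hmemS : (x, y) ∈ S := ⟨hx, hmem⟩
  -- first-derivative formulas for v on S
  have hvx : ∀ p ∈ S, pdx v p.1 p.2 =
      ((p.2 ^ 2 - p.1 ^ 2) / (p.1 ^ 2 + p.2 ^ 2) ^ 2) *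
        gx (p.1 / (p.1 ^ 2 + p.2 ^ 2), p.2 / (p.1 ^ 2 + p.2 ^ 2)) +
      (-(2 * p.1 * p.2) / (p.1 ^ 2 + p.2 ^ 2) ^ 2) *
        gy (p.1 / (p.1 ^ 2 + p.2 ^ 2), p.2 / (p.1 ^ 2 + p.2 ^ 2)) := by
    rintro ⟨a, b⟩ ⟨ha, hb⟩
    have ha' : (0:ℝ) < a := ha
    have hrn : a ^ 2 + b ^ 2 ≠ 0 := by positivity
    have hd : DifferentiableAt ℝ W (a / (a ^ 2 + b ^ 2), b / (a ^ 2 + b ^ 2)) := hUd _ hb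
    have hder := chainHD hd (L1 hrn) (L2 hrn) rfl rfl
    show deriv (fun t => v t b) a = _
    have hfun : (fun t => v t b) =
        (fun s => W (s / (s ^ 2 + b ^ 2), b / (s ^ 2 + b ^ 2))) := by
      funext t; rw [hv]
    rw [hfun, hder.deriv]
  have hvy : ∀ p ∈ S, pdy v p.1 p.2 =
      (-(2 * p.1 * p.2) / (p.1 ^ 2 + p.2 ^ 2) ^ 2) *
        gx (p.1 / (p.1 ^ 2 + p.2 ^ 2), p.2 / (p.1 ^ 2 + p.2 ^ 2)) +
      ((p.1 ^ 2 - p.2 ^ 2) / (p.1 ^ 2 + p.2 ^ 2) ^ 2) *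
        gy (p.1 / (p.1 ^ 2 + p.2 ^ 2), p.2 / (p.1 ^ 2 + p.2 ^ 2)) := by
    rintro ⟨a, b⟩ ⟨ha, hb⟩
    have ha' : (0:ℝ) < a := ha
    have hrn : a ^ 2 + b ^ 2 ≠ 0 := by positivity
    have hd : DifferentiableAt ℝ W (a / (a ^ 2 + b ^ 2), b / (a ^ 2 + b ^ 2)) := hUd _ hb
    have hder := chainHD hd (L3 hrn) (L4 hrn) rfl rfl
    show deriv (fun t => v a t) b = _
    have hfun : (fun t => v a t) =
        (fun s => W (a / (a ^ 2 + s ^ 2), s / (a ^ 2 + s ^ 2))) := by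
      funext t; rw [hv]
    rw [hfun, hder.deriv]
  -- neighbourhood facts in S
  have hSnx : ∀ᶠ t in nhds x, (t, y) ∈ S := by
    have hc : Continuous fun t : ℝ => (t, y) := by fun_prop
    exact Filter.eventually_of_mem
      (hc.continuousAt.preimage_mem_nhds (hSopen.mem_nhds hmemS)) (fun t ht => ht)
  have hSny : ∀ᶠ t in nhds y, (x, t) ∈ S := by
    have hc : Continuous fun t : ℝ => (x, t) := by fun_prop
    exact Filter.eventually_of_mem
      (hc.continuousAt.preimage_mem_nhds (hSopen.mem_nhds hmemS)) (fun t ht => ht)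
  -- second derivatives of v
  have hvxx : pdx (pdx v) x y =
      ((2*x^3 - 6*x*y^2)/(x^2+y^2)^3) * gx (X, Y) +
      ((y^2 - x^2)/(x^2+y^2)^2) *
        (((y^2 - x^2)/(x^2+y^2)^2) * A1 + (-(2*x*y)/(x^2+y^2)^2) * A2) +
      (((6*x^2*y - 2*y^3)/(x^2+y^2)^3) * gy (X, Y) +
      (-(2*x*y)/(x^2+y^2)^2) *
        (((y^2 - x^2)/(x^2+y^2)^2) * B1 + (-(2*x*y)/(x^2+y^2)^2) * B2)) := by
    have hev : (fun t => pdx v t y) =ᶠ[nhds x] (fun t =>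
        ((y ^ 2 - t ^ 2) / (t ^ 2 + y ^ 2) ^ 2) *
          gx (t / (t ^ 2 + y ^ 2), y / (t ^ 2 + y ^ 2)) +
        (-(2 * t * y) / (t ^ 2 + y ^ 2) ^ 2) *
          gy (t / (t ^ 2 + y ^ 2), y / (t ^ 2 + y ^ 2))) := by
      filter_upwards [hSnx] with t ht
      exact hvx (t, y) ht
    show deriv (fun t => pdx v t y) x = _
    rw [hev.deriv_eq]
    have hP := chainHD (hXd _ hmem) (L1 hr) (L2 hr) rfl rfl
    have hQ := chainHD (hYd _ hmem) (L1 hr) (L2 hr) rfl rfl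
    exact (((M1 hr).mul hP).add ((M2 hr).mul hQ)).deriv
  have hvyy : pdy (pdy v) x y =
      ((-2*x^3 + 6*x*y^2)/(x^2+y^2)^3) * gx (X, Y) +
      (-(2*x*y)/(x^2+y^2)^2) *
        ((-(2*x*y)/(x^2+y^2)^2) * A1 + ((x^2 - y^2)/(x^2+y^2)^2) * A2) +
      (((-6*x^2*y + 2*y^3)/(x^2+y^2)^3) * gy (X, Y) +
      ((x^2 - y^2)/(x^2+y^2)^2) *
        ((-(2*x*y)/(x^2+y^2)^2) * B1 + ((x^2 - y^2)/(x^2+y^2)^2) * B2)) := by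
    have hev : (fun t => pdy v x t) =ᶠ[nhds y] (fun t =>
        (-(2 * x * t) / (x ^ 2 + t ^ 2) ^ 2) *
          gx (x / (x ^ 2 + t ^ 2), t / (x ^ 2 + t ^ 2)) +
        ((x ^ 2 - t ^ 2) / (x ^ 2 + t ^ 2) ^ 2) *
          gy (x / (x ^ 2 + t ^ 2), t / (x ^ 2 + t ^ 2))) := by
      filter_upwards [hSny] with t ht
      exact hvy (x, t) ht
    show deriv (fun t => pdy v x t) y = _
    rw [hev.deriv_eq]
    have hP := chainHD (hXd _ hmem) (L3 hr) (L4 hr) rfl rfl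
    have hQ := chainHD (hYd _ hmem) (L3 hr) (L4 hr) rfl rfl
    exact (((M3 hr).mul hP).add ((M4 hr).mul hQ)).deriv
  -- conclude
  have hFv : F (v x y) = X ^ 2 * (A1 + B2) := by
    rw [hv x y, hlap]
    field_simp
    rfl
  rw [hvxx, hvyy, show x ^ (-2:ℤ) = (x ^ 2)⁻¹ by
    rw [show ((-2:ℤ)) = -((2:ℕ):ℤ) by norm_num, zpow_neg, zpow_natCast], hFv, hX]
  field_simp
  ring
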